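/- For every stationary distribution ψ ∈ M_s(A^{s+1}) and every integer l ≥ 1, min over ν ∈ E(l,n,s+1) of the ℓ¹-distance ‖ψ − ν‖₁ is at most 2(s+3) n^{s+1} / l; consequently every stationary distribution on A^{s+1} is the limit in total variation of a sequence of empirical measures ν_l ∈ E(l,n,s+1). -/

import Mathlib

open Finset Filter

/-- Probability distribution on a finite type. -/
def IsProbF {α : Type*} [Fintype α] (p : α → ℝ) : Prop := (∀ a, 0 ≤ p a) ∧ ∑ a, p a = 1

/-- Reduction of a distribution on `A^{k+1}` to `A^k` (sum over the last coordinate). -/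
def reduce {n k : ℕ} (ν : (Fin (k+1) → Fin n) → ℝ) : (Fin k → Fin n) → ℝ :=
  fun i => ∑ j, ν (Fin.snoc i j)

/-- Stationarity (consistency) of a distribution on `A^{k+1}`. -/
def IsStatT {n : ℕ} : (k : ℕ) → ((Fin (k+1) → Fin n) → ℝ) → Prop
  | 0, _ => True
  | k+1, ν => (∀ i : Fin (k+1) → Fin n, ∑ j, ν (Fin.snoc i j) = ∑ j, ν (Fin.cons j i)) ∧
      IsStatT k (reduce ν)

open Fin.NatCast in
/-- Cyclic empirical `(s+1)`-tuple measure of a sample path of length `l`. -/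
noncomputable def empT {n : ℕ} (s : ℕ) {l : ℕ} [NeZero l] (x : Fin l → Fin n) :
    (Fin (s+1) → Fin n) → ℝ :=
  fun i => (∑ t : Fin l,
    if (fun r : Fin (s+1) => x (t + (r.val : Fin l))) = i then (1:ℝ) else 0) / l

open scoped Classical in
/-- `E(l,n,s+1)` with `l = m+1`. -/
noncomputable def Eset (n s m : ℕ) : Finset ((Fin (s+1) → Fin n) → ℝ) :=
  Finset.image (fun x : Fin (m+1) → Fin n => empT s x) Finset.univ

namespace Stmt7
open Fin.NatCast
variable {n s : ℕ}

abbrev E (n s : ℕ) := Fin (s+1) → Fin n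
abbrev V (n s : ℕ) := Fin s → Fin n

def compat (e f : E n s) : Prop := Fin.tail e = Fin.init f

def outd (c : E n s → ℕ) (v : V n s) : ℕ := ∑ j, c (Fin.snoc v j)
def ind (c : E n s → ℕ) (v : V n s) : ℕ := ∑ j, c (Fin.cons j v)
def cnt (L : List (E n s)) : E n s → ℕ := fun i => L.count i

lemma outd_add (c d : E n s → ℕ) (v : V n s) : outd (fun e => c e + d e) v = outd c v + outd d v := by
  simp [outd, Finset.sum_add_distrib]

lemma ind_add (c d : E n s → ℕ) (v : V n s) : ind (fun e => c e + d e) v = ind c v + ind d v := by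
  simp [ind, Finset.sum_add_distrib]

lemma sum_cnt (L : List (E n s)) : ∑ i, cnt L i = L.length := by
  induction L with
  | nil => simp [cnt]
  | cons e L ih =>
      simp only [cnt, List.count_cons, List.length_cons] at *
      rw [Finset.sum_add_distrib, ih]
      simp only [beq_iff_eq, Finset.sum_ite_eq, Finset.mem_univ, if_true]

lemma cnt_append (L₁ L₂ : List (E n s)) (i : E n s) :
    cnt (L₁ ++ L₂) i = cnt L₁ i + cnt L₂ i := by
  simp [cnt, List.count_append]

lemma init_key (e : E n s) (u : V n s) :
    (if Fin.init e = u then 1 else 0) = ∑ j, (if Fin.snoc u j = e then (1:ℕ) else 0) := by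
  by_cases h : Fin.init e = u
  · rw [if_pos h, Finset.sum_eq_single (e (Fin.last s))]
    · rw [if_pos]; rw [← h]; exact Fin.snoc_init_self e
    · intro j _ hj; rw [if_neg]; intro he; exact hj (by rw [← he, Fin.snoc_last])
    · intro hmem; exact absurd (Finset.mem_univ _) hmem
  · rw [if_neg h, Finset.sum_eq_zero]
    intro j _; rw [if_neg]; intro he; exact h (by rw [← he, Fin.init_snoc])

lemma tail_key (e : E n s) (u : V n s) :
    (if Fin.tail e = u then 1 else 0) = ∑ j, (if Fin.cons j u = e then (1:ℕ) else 0) := by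
  by_cases h : Fin.tail e = u
  · rw [if_pos h, Finset.sum_eq_single (e 0)]
    · rw [if_pos]; rw [← h]; exact Fin.cons_self_tail e
    · intro j _ hj; rw [if_neg]; intro he; exact hj (by rw [← he, Fin.cons_zero])
    · intro hmem; exact absurd (Finset.mem_univ _) hmem
  · rw [if_neg h, Finset.sum_eq_zero]
    intro j _; rw [if_neg]; intro he; exact h (by rw [← he, Fin.tail_cons])

lemma countP_init (L : List (E n s)) (u : V n s) :
    L.countP (fun e => decide (Fin.init e = u)) = outd (cnt L) u := by
  induction L with
  | nil => simp [outd, cnt]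
  | cons e L ih =>
      rw [List.countP_cons]
      simp only [outd, cnt, List.count_cons] at *
      rw [Finset.sum_add_distrib, ← ih]
      simp only [decide_eq_true_eq, beq_iff_eq]
      rw [init_key e u]
      congr 1
      exact Finset.sum_congr rfl fun j _ => by simp [eq_comm]

lemma countP_tail (L : List (E n s)) (u : V n s) :
    L.countP (fun e => decide (Fin.tail e = u)) = ind (cnt L) u := by
  induction L with
  | nil => simp [ind, cnt]
  | cons e L ih =>
      rw [List.countP_cons]
      simp only [ind, cnt, List.count_cons] at *
      rw [Finset.sum_add_distrib, ← ih]
      simp only [decide_eq_true_eq, beq_iff_eq]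
      rw [tail_key e u]
      congr 1
      exact Finset.sum_congr rfl fun j _ => by simp [eq_comm]

structure Tr (L : List (E n s)) (v w : V n s) : Prop where
  ne : L ≠ []
  ch : L.IsChain compat
  hs : ∀ y ∈ L.head?, Fin.init y = v
  he : ∀ x ∈ L.getLast?, Fin.tail x = w

lemma tr_count {L : List (E n s)} {v w : V n s} (h : Tr L v w) (u : V n s) :
    L.countP (fun e => decide (Fin.init e = u)) + (if u = w then 1 else 0)
    = L.countP (fun e => decide (Fin.tail e = u)) + (if u = v then 1 else 0) := by
  induction L generalizing v with
  | nil => exact absurd rfl h.ne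
  | cons e L ih =>
    have hv : Fin.init e = v := h.hs e (by simp)
    cases L with
    | nil =>
        have hw : Fin.tail e = w := h.he e (by simp)
        simp only [List.countP_cons, List.countP_nil, decide_eq_true_eq, Nat.zero_add]
        subst hv hw
        have a1 : (if Fin.init e = u then (1:ℕ) else 0) = (if u = Fin.init e then 1 else 0) := by
          simp [eq_comm]
        have a2 : (if Fin.tail e = u then (1:ℕ) else 0) = (if u = Fin.tail e then 1 else 0) := by
          simp [eq_comm]
        omega
    | cons f L' =>
        have hcomp : compat e f := (List.isChain_cons_cons.mp h.ch).1
        have htr : Tr (f :: L') (Fin.init f) w := by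
          refine ⟨by simp, (List.isChain_cons_cons.mp h.ch).2, by simp, ?_⟩
          intro x hx
          apply h.he
          rw [List.getLast?_cons_cons]
          exact hx
        have key := ih htr
        simp only [List.countP_cons, decide_eq_true_eq] at *
        have h1 : (if Fin.init e = u then 1 else 0) = (if u = v then 1 else 0) := by
          simp [hv, eq_comm]
        have h2 : (if Fin.tail e = u then 1 else 0) = (if u = Fin.init f then 1 else 0) := by
          have : Fin.tail e = Fin.init f := hcomp
          simp [this, eq_comm]
        omega

lemma tr_extend (c : E n s → ℕ) (hbal : ∀ v, outd c v = ind c v) :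
    ∀ (fuel : ℕ) (L : List (E n s)) (v w : V n s), Tr L v w →
    (∀ i, cnt L i ≤ c i) → (∑ i, c i ≤ L.length + fuel) →
    ∃ W : List (E n s), Tr W v v ∧ (∀ i, cnt W i ≤ c i) := by
  intro fuel
  induction fuel with
  | zero =>
      intro L v w htr hcnt hlen
      by_cases hvw : w = v
      · exact ⟨L, hvw ▸ htr, hcnt⟩
      · exfalso
        -- find an extension edge
        have hj : ∃ j, cnt L (Fin.snoc w j) < c (Fin.snoc w j) := by
          by_contra hno
          push_neg at hno
          have hout : outd (cnt L) w = outd c w := by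
            unfold outd
            exact Finset.sum_congr rfl fun j _ => le_antisymm (hcnt _) (hno j)
          have hkey := tr_count htr w
          rw [if_pos rfl, if_neg hvw, countP_init, countP_tail] at hkey
          have hle : ind (cnt L) w ≤ ind c w :=
            Finset.sum_le_sum fun j _ => hcnt _
          rw [← hbal w, ← hout] at hle
          omega
        obtain ⟨j, hj⟩ := hj
        have h1 : ∑ i, cnt L i < ∑ i, c i :=
          Finset.sum_lt_sum (fun i _ => hcnt i) ⟨Fin.snoc w j, Finset.mem_univ _, hj⟩
        rw [sum_cnt] at h1
        omega
  | succ fuel ih =>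
      intro L v w htr hcnt hlen
      by_cases hvw : w = v
      · exact ⟨L, hvw ▸ htr, hcnt⟩
      · have hj : ∃ j, cnt L (Fin.snoc w j) < c (Fin.snoc w j) := by
          by_contra hno
          push_neg at hno
          have hout : outd (cnt L) w = outd c w := by
            unfold outd
            exact Finset.sum_congr rfl fun j _ => le_antisymm (hcnt _) (hno j)
          have hkey := tr_count htr w
          rw [if_pos rfl, if_neg hvw, countP_init, countP_tail] at hkey
          have hle : ind (cnt L) w ≤ ind c w :=
            Finset.sum_le_sum fun j _ => hcnt _
          rw [← hbal w, ← hout] at hle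
          omega
        obtain ⟨j, hj⟩ := hj
        set e : E n s := Fin.snoc w j with he_def
        have htr' : Tr (L ++ [e]) v (Fin.tail e) := by
          refine ⟨by simp, ?_, ?_, ?_⟩
          · rw [List.isChain_append]
            refine ⟨htr.ch, List.isChain_singleton e, ?_⟩
            intro x hx y hy
            simp only [List.head?_cons, Option.mem_some_iff] at hy
            have := htr.he x hx
            subst hy
            show Fin.tail x = Fin.init e
            rw [this, he_def, Fin.init_snoc]
          · intro y hy
            apply htr.hs
            rwa [List.head?_append_of_ne_nil _ htr.ne] at hy
          · intro x hx
            rw [List.getLast?_concat] at hx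
            simp only [Option.mem_some_iff] at hx
            subst hx
            rfl
        have hcnt' : ∀ i, cnt (L ++ [e]) i ≤ c i := by
          intro i
          rw [cnt_append]
          by_cases hie : i = e
          · have h1 : cnt [e] i = 1 := by simp [cnt, hie]
            have h2 : cnt L i < c i := by rw [hie]; exact hj
            rw [h1]
            omega
          · have h1 : cnt [e] i = 0 := by
              simp only [cnt, List.count_singleton']
              rw [if_neg (fun h => hie h.symm)]
            have h3 := hcnt i
            omega
        have hlen' : ∑ i, c i ≤ (L ++ [e]).length + fuel := by
          rw [List.length_append]
          simp only [List.length_singleton]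
          omega
        exact ih (L ++ [e]) v (Fin.tail e) htr' hcnt' hlen'

lemma exists_cyc_at (c : E n s → ℕ) (hbal : ∀ v, outd c v = ind c v) (v : V n s)
    (hv : 0 < outd c v) : ∃ W, Tr W v v ∧ ∀ i, cnt W i ≤ c i := by
  have hj : ∃ j, 0 < c (Fin.snoc v j) := by
    by_contra hno
    push_neg at hno
    simp only [Nat.le_zero] at hno
    have : outd c v = 0 := Finset.sum_eq_zero fun j _ => hno j
    omega
  obtain ⟨j, hj⟩ := hj
  set e : E n s := Fin.snoc v j with he_def
  have htr : Tr [e] v (Fin.tail e) := by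
    refine ⟨by simp, List.isChain_singleton e, ?_, ?_⟩
    · intro y hy
      simp only [List.head?_cons, Option.mem_some_iff] at hy
      subst hy
      rw [he_def, Fin.init_snoc]
    · intro x hx
      simp only [List.getLast?_singleton, Option.mem_some_iff] at hx
      subst hx
      rfl
  apply tr_extend c hbal (∑ i, c i) [e] v (Fin.tail e) htr
  · intro i
    by_cases hie : i = e
    · subst hie
      simp [cnt]; exact hj
    · simp [cnt, List.count_singleton, Ne.symm hie]
  · simp

lemma cyc_next {W : List (E n s)} {v : V n s} (h : Tr W v v) {e : E n s} (he : e ∈ W) :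
    ∃ f ∈ W, compat e f := by
  obtain ⟨i, hi⟩ := List.mem_iff_get.mp he
  by_cases hlt : i.val + 1 < W.length
  · refine ⟨W.get ⟨i.val+1, hlt⟩, List.get_mem _ _, ?_⟩
    rw [← hi]
    exact List.isChain_iff_getElem.mp h.ch i.val (by omega)
  · have hW : W ≠ [] := h.ne
    refine ⟨W.head hW, List.head_mem hW, ?_⟩
    have hie : W.getLast hW = e := by
      rw [List.getLast_eq_getElem, ← hi, List.get_eq_getElem]
      congr 1
      have := i.isLt
      omega
    have h1 : Fin.tail e = v := by
      apply h.he
      rw [List.getLast?_eq_getLast hW, hie]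
      rfl
    have h2 : Fin.init (W.head hW) = v := by
      apply h.hs
      rw [List.head?_eq_head hW]
      rfl
    exact h1.trans h2.symm

lemma debruijn_closure (hn : 0 < n) (S : Finset (V n s)) (hne : S.Nonempty)
    (hcl : ∀ v ∈ S, ∀ j : Fin n, Fin.tail (Fin.snoc v j : E n s) ∈ S) (u : V n s) : u ∈ S := by
  obtain ⟨v₁, hv₁⟩ := hne
  set q : ℕ → Fin n := fun a =>
    if h : a < s then v₁ ⟨a, h⟩ else if h2 : a - s < s then u ⟨a - s, h2⟩ else ⟨0, hn⟩ with hq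
  set mix : ℕ → V n s := fun k => fun r => q (r.val + k) with hmix
  have h0 : mix 0 = v₁ := by
    funext r
    simp only [hmix, hq]
    rw [dif_pos (by omega : r.val + 0 < s)]
    exact congrArg v₁ (Fin.ext (by simp))
  have hsu : mix s = u := by
    funext r
    have hr := r.isLt
    simp only [hmix, hq]
    rw [dif_neg (by omega), dif_pos (by omega : r.val + s - s < s)]
    congr 1
    exact Fin.ext (by simp)
  have main : ∀ k, k ≤ s → mix k ∈ S := by
    intro k
    induction k with
    | zero => intro _; rw [h0]; exact hv₁
    | succ k ih =>
        intro hk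
        have hk' : k ≤ s := by omega
        have hstep : mix (k+1) =
            Fin.tail (Fin.snoc (mix k) (mix (k+1) ⟨s-1, by omega⟩) : E n s) := by
          funext r
          have hr := r.isLt
          show mix (k+1) r = (Fin.snoc (mix k) (mix (k+1) ⟨s-1, by omega⟩) : E n s) r.succ
          by_cases hc : r.val + 1 < s
          · have hcast : r.succ = Fin.castSucc ⟨r.val + 1, hc⟩ := Fin.ext (by simp)
            rw [hcast, Fin.snoc_castSucc]
            show q (r.val + (k+1)) = q ((r.val + 1) + k)
            exact congrArg q (by omega)
          · have hlast : r.succ = Fin.last s := Fin.ext (by simp; omega)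
            rw [hlast, Fin.snoc_last]
            show q (r.val + (k+1)) = q ((s-1) + (k+1))
            exact congrArg q (by omega)
        rw [hstep]
        exact hcl _ (ih hk') _
  rw [← hsu]
  exact main s le_rfl

lemma tr_rotate {X Y : List (E n s)} {e : E n s} {v : V n s}
    (h : Tr (X ++ e :: Y) v v) : Tr ((e :: Y) ++ X) (Fin.init e) (Fin.init e) := by
  have hch := h.ch
  rw [List.isChain_append] at hch
  obtain ⟨hchX, hchEY, hlink⟩ := hch
  refine ⟨by simp, ?_, ?_, ?_⟩
  · rw [List.isChain_append]
    refine ⟨hchEY, hchX, ?_⟩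
    intro x hx y hy
    have hxv : Fin.tail x = v := by
      apply h.he
      rw [List.getLast?_append_of_ne_nil _ (by simp)]
      exact hx
    have hyv : Fin.init y = v := by
      apply h.hs
      cases X with
      | nil => simp at hy
      | cons a X' =>
          simp only [List.head?_cons, Option.mem_some_iff] at hy
          subst hy
          simp
    exact hxv.trans hyv.symm
  · intro y hy
    simp only [List.cons_append, List.head?_cons, Option.mem_some_iff] at hy
    subst hy
    rfl
  · intro x hx
    cases hX : X with
    | nil =>
        subst hX
        simp only [List.append_nil] at hx
        have h1 : Fin.tail x = v := by
          apply h.he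
          simpa using hx
        have h2 : Fin.init e = v := by
          apply h.hs
          simp
        rw [h1, h2]
    | cons a X' =>
        subst hX
        rw [List.getLast?_append_of_ne_nil _ (by simp)] at hx
        exact hlink x hx e (by simp)

lemma tr_append {W₁ W₂ : List (E n s)} {v : V n s} (h₁ : Tr W₁ v v) (h₂ : Tr W₂ v v) :
    Tr (W₁ ++ W₂) v v := by
  refine ⟨by simp [h₁.ne], ?_, ?_, ?_⟩
  · rw [List.isChain_append]
    refine ⟨h₁.ch, h₂.ch, ?_⟩
    intro x hx y hy
    exact (h₁.he x hx).trans (h₂.hs y hy).symm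
  · intro y hy
    rw [List.head?_append_of_ne_nil _ h₁.ne] at hy
    exact h₁.hs y hy
  · intro x hx
    rw [List.getLast?_append_of_ne_nil _ h₂.ne] at hx
    exact h₂.he x hx

lemma cnt_outd_eq_ind {W : List (E n s)} {v : V n s} (h : Tr W v v) (u : V n s) :
    outd (cnt W) u = ind (cnt W) u := by
  have := tr_count h u
  rw [countP_init, countP_tail] at this
  omega

lemma euler_aux (c : E n s → ℕ) (hn : 0 < n) (hbal : ∀ v, outd c v = ind c v)
    (hpos : ∀ e, 1 ≤ c e) :
    ∀ (k : ℕ) (W : List (E n s)) (v : V n s), Tr W v v → (∀ i, cnt W i ≤ c i) →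
    (∑ i, c i ≤ W.length + k) →
    ∃ W' v', Tr W' v' v' ∧ ∀ i, cnt W' i = c i := by
  intro k
  induction k with
  | zero =>
      intro W v htr hcnt hlen
      refine ⟨W, v, htr, ?_⟩
      by_contra hne
      push_neg at hne
      obtain ⟨i0, hi0⟩ := hne
      have hlt : cnt W i0 < c i0 := lt_of_le_of_ne (hcnt i0) hi0
      have : ∑ i, cnt W i < ∑ i, c i :=
        Finset.sum_lt_sum (fun i _ => hcnt i) ⟨i0, Finset.mem_univ _, hlt⟩
      rw [sum_cnt] at this
      omega
  | succ k ih =>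
      intro W v htr hcnt hlen
      by_cases hdone : ∀ i, cnt W i = c i
      · exact ⟨W, v, htr, hdone⟩
      push_neg at hdone
      obtain ⟨e0, he0⟩ := hdone
      have he0' : cnt W e0 < c e0 := lt_of_le_of_ne (hcnt e0) he0
      set c'' : E n s → ℕ := fun e => c e - cnt W e with hc''
      have hbal'' : ∀ u, outd c'' u = ind c'' u := by
        intro u
        have h1 : outd c'' u = outd c u - outd (cnt W) u :=
          Finset.sum_tsub_distrib Finset.univ fun j _ => hcnt _
        have h2 : ind c'' u = ind c u - ind (cnt W) u :=
          Finset.sum_tsub_distrib Finset.univ fun j _ => hcnt _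
        rw [h1, h2, hbal u, cnt_outd_eq_ind htr u]
      set S : Finset (V n s) := (W.map Fin.init).toFinset with hS
      have hSmem : ∀ {f : E n s}, f ∈ W → Fin.init f ∈ S := by
        intro f hf
        rw [hS, List.mem_toFinset]
        exact List.mem_map_of_mem hf
      have hSuniv : (∀ u ∈ S, outd c'' u = 0) → ∀ u : V n s, u ∈ S := by
        intro hzero
        apply debruijn_closure hn S
        · obtain ⟨y, hy⟩ := List.exists_mem_of_ne_nil W htr.ne
          exact ⟨Fin.init y, hSmem hy⟩
        · intro u huS j
          have h1 : c'' (Fin.snoc u j) = 0 := by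
            have := hzero u huS
            rw [outd, Finset.sum_eq_zero_iff] at this
            exact this j (Finset.mem_univ _)
          have h2 : 1 ≤ cnt W (Fin.snoc u j) := by
            have := hpos (Fin.snoc u j)
            have := hcnt (Fin.snoc u j)
            simp only [hc''] at h1
            omega
          have hmem : (Fin.snoc u j : E n s) ∈ W := by
            rw [← List.count_pos_iff]
            exact h2
          obtain ⟨f, hfW, hcf⟩ := cyc_next htr hmem
          have : Fin.tail (Fin.snoc u j : E n s) = Fin.init f := hcf
          rw [this]
          exact hSmem hfW
      by_cases hex : ∃ u ∈ S, 0 < outd c'' u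
      · obtain ⟨v₁, hv₁S, hv₁⟩ := hex
        obtain ⟨W₁, htr₁, hcnt₁⟩ := exists_cyc_at c'' hbal'' v₁ hv₁
        rw [hS, List.mem_toFinset, List.mem_map] at hv₁S
        obtain ⟨e, heW, hev⟩ := hv₁S
        obtain ⟨X, Y, hXY⟩ := List.append_of_mem heW
        have htrW' : Tr (X ++ e :: Y) v v := hXY ▸ htr
        have htrR : Tr ((e :: Y) ++ X) v₁ v₁ := hev ▸ tr_rotate htrW'
        have htrR₁ : Tr (W₁ ++ ((e :: Y) ++ X)) v₁ v₁ := tr_append htr₁ htrR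
        have hcntR : ∀ i, cnt ((e :: Y) ++ X) i = cnt W i := by
          intro i
          rw [hXY, cnt_append, cnt_append]
          omega
        have hcnt' : ∀ i, cnt (W₁ ++ ((e :: Y) ++ X)) i ≤ c i := by
          intro i
          rw [cnt_append, hcntR]
          have := hcnt₁ i
          have := hcnt i
          simp only [hc''] at *
          omega
        have hlen' : ∑ i, c i ≤ (W₁ ++ ((e :: Y) ++ X)).length + k := by
          have hW₁ : 1 ≤ W₁.length := by
            have := htr₁.ne
            cases W₁ with
            | nil => exact absurd rfl this
            | cons _ _ => simp
          have hlenR : ((e :: Y) ++ X).length = W.length := by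
            rw [hXY]
            simp
            omega
          rw [List.length_append, hlenR]
          omega
        exact ih _ _ htrR₁ hcnt' hlen'
      · exfalso
        push_neg at hex
        have huniv := hSuniv (fun u hu => by
          have := hex u hu
          omega)
        have h1 : 1 ≤ c'' e0 := by
          simp only [hc'']
          omega
        have h2 : 0 < outd c'' (Fin.init e0) := by
          have : c'' (Fin.snoc (Fin.init e0) (e0 (Fin.last s))) = c'' e0 := by
            rw [Fin.snoc_init_self]
          calc 0 < c'' e0 := h1
          _ = c'' (Fin.snoc (Fin.init e0) (e0 (Fin.last s))) := this.symm
          _ ≤ outd c'' (Fin.init e0) :=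
              Finset.single_le_sum (f := fun j => c'' (Fin.snoc (Fin.init e0) j))
                (fun j _ => Nat.zero_le _) (Finset.mem_univ _)
        have := hex (Fin.init e0) (huniv _)
        omega

lemma euler (c : E n s → ℕ) (hn : 0 < n) (hbal : ∀ v, outd c v = ind c v)
    (hpos : ∀ e, 1 ≤ c e) :
    ∃ (W : List (E n s)) (v : V n s), Tr W v v ∧ ∀ i, cnt W i = c i := by
  have j0 : Fin n := ⟨0, hn⟩
  set v₀ : V n s := fun _ => j0 with hv₀
  have hout : 0 < outd c v₀ := by
    calc 0 < c (Fin.snoc v₀ j0) := hpos _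
    _ ≤ outd c v₀ := Finset.single_le_sum (f := fun j => c (Fin.snoc v₀ j))
        (fun j _ => Nat.zero_le _) (Finset.mem_univ _)
  obtain ⟨W, htr, hcnt⟩ := exists_cyc_at c hbal v₀ hout
  obtain ⟨W', v', htr', hcnt'⟩ := euler_aux c hn hbal hpos (∑ i, c i) W v₀ htr hcnt (by omega)
  exact ⟨W', v', htr', hcnt'⟩

lemma count_eq_sum_get (L : List (E n s)) (i : E n s) :
    ∑ t : Fin L.length, (if L.get t = i then (1:ℕ) else 0) = cnt L i := by
  induction L with
  | nil => simp [cnt]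
  | cons e L ih =>
      have h1 : ∑ t : Fin ((e :: L).length), (if (e :: L).get t = i then (1:ℕ) else 0)
          = ∑ t : Fin (L.length + 1), (if (e :: L).get t = i then (1:ℕ) else 0) := rfl
      rw [h1, Fin.sum_univ_succ]
      have hsucc : ∀ t : Fin L.length, (e :: L).get t.succ = L.get t := fun t => rfl
      simp only [hsucc]
      rw [ih]
      have hzero : (e :: L).get (0 : Fin (L.length + 1)) = e := rfl
      rw [hzero]
      simp only [cnt, List.count_cons, beq_iff_eq]
      by_cases h : e = i
      · omega
      · omega

lemma trail_to_path (m : ℕ) (W : List (E n s)) (v : V n s) (htr : Tr W v v)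
    (hlen : W.length = m + 1) :
    ∃ x : Fin (m+1) → Fin n, ∀ i : E n s,
      (∑ t : Fin (m+1), if (fun r : Fin (s+1) => x (t + (r.val : Fin (m+1)))) = i
        then (1:ℝ) else 0) = (cnt W i : ℝ) := by
  have hWlen : ∀ t : Fin (m+1), t.val < W.length := by
    intro t; rw [hlen]; exact t.isLt
  set w : Fin (m+1) → E n s := fun t => W.get ⟨t.val, hWlen t⟩ with hw
  have hshift : ∀ t : Fin (m+1), compat (w t) (w (t+1)) := by
    intro t
    by_cases hlast : t = Fin.last m
    · have hv1 : (t+1).val = 0 := by rw [Fin.val_add_one, if_pos hlast]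
      have hvt : t.val = m := by rw [hlast]; rfl
      have h1 : Fin.tail (w t) = v := by
        apply htr.he
        rw [List.getLast?_eq_getElem?, List.getElem?_eq_getElem (by omega)]
        simp only [Option.mem_some_iff, hw]
        rw [List.get_eq_getElem]
        congr 1
        simp only [Fin.val_mk]
        omega
      have h2 : Fin.init (w (t+1)) = v := by
        apply htr.hs
        rw [List.head?_eq_getElem?, List.getElem?_eq_getElem (by rw [hlen]; omega)]
        simp only [Option.mem_some_iff, hw]
        rw [List.get_eq_getElem]
        congr 1
        simp only [Fin.val_mk]
        omega
      exact h1.trans h2.symm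
    · have hv1 : (t+1).val = t.val + 1 := by rw [Fin.val_add_one, if_neg hlast]
      have hvm : t.val < m := by
        by_contra hh
        apply hlast
        have := t.isLt
        exact Fin.ext (by simp only [Fin.val_last]; omega)
      have hWl := hWlen t
      have hchain := List.isChain_iff_getElem.mp htr.ch t.val (by omega)
      have heq : w (t+1) = W.get ⟨t.val + 1, by omega⟩ := by
        simp only [hw]
        congr 1
        exact Fin.ext (by simp [hv1])
      rw [heq]
      exact hchain
  have hwin : ∀ (k : ℕ) (hk : k ≤ s) (t : Fin (m+1)),
      w (t + (k : Fin (m+1))) ⟨0, by omega⟩ = w t ⟨k, by omega⟩ := by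
    intro k
    induction k with
    | zero =>
        intro _ t
        have : ((0:ℕ) : Fin (m+1)) = 0 := Nat.cast_zero
        rw [this, add_zero]
    | succ k ih =>
        intro hk t
        have hc : ((k+1 : ℕ) : Fin (m+1)) = (k : Fin (m+1)) + 1 := by push_cast; ring
        have hre : t + ((k : Fin (m+1)) + 1) = (t + 1) + (k : Fin (m+1)) := by
          rw [add_comm (k : Fin (m+1)) 1, ← add_assoc]
        rw [hc, hre, ih (by omega) (t+1)]
        have hcomp := hshift t
        have hpt := congrFun hcomp ⟨k, by omega⟩
        exact hpt.symm
  refine ⟨fun t => w t ⟨0, by omega⟩, ?_⟩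
  intro i
  have hwindow : ∀ t : Fin (m+1),
      (fun r : Fin (s+1) => w (t + (r.val : Fin (m+1))) ⟨0, by omega⟩) = w t := by
    intro t
    funext r
    have := hwin r.val (by omega) t
    rw [this]
  have hsum : ∀ t : Fin (m+1),
      (if (fun r : Fin (s+1) => w (t + (r.val : Fin (m+1))) ⟨0, by omega⟩) = i
        then (1:ℝ) else 0) = (if w t = i then (1:ℝ) else 0) := by
    intro t
    rw [hwindow t]
  rw [Finset.sum_congr rfl fun t _ => hsum t]
  have hnat : ∑ t : Fin (m+1), (if w t = i then (1:ℕ) else 0) = cnt W i := by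
    rw [← count_eq_sum_get W i]
    exact Fintype.sum_equiv (finCongr hlen.symm) _ _ (fun t => rfl)
  have : ∑ t : Fin (m+1), (if w t = i then (1:ℝ) else 0)
      = ((∑ t : Fin (m+1), if w t = i then (1:ℕ) else 0 : ℕ) : ℝ) := by
    push_cast
    apply Finset.sum_congr rfl
    intro t _
    split <;> simp
  rw [this, hnat]

def snocE : (V n s × Fin n) ≃ E n s where
  toFun p := Fin.snoc p.1 p.2
  invFun e := (Fin.init e, e (Fin.last s))
  left_inv p := by
    ext
    · simp [Fin.init_snoc]
    · simp [Fin.snoc_last]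
  right_inv e := Fin.snoc_init_self e

def consE : (Fin n × V n s) ≃ E n s where
  toFun p := Fin.cons p.1 p.2
  invFun e := (e 0, Fin.tail e)
  left_inv p := by
    ext
    · simp
    · simp [Fin.tail_cons]
  right_inv e := Fin.cons_self_tail e

lemma sum_outd_eq (c : E n s → ℕ) : ∑ v, outd c v = ∑ e, c e := by
  calc ∑ v, outd c v = ∑ p : V n s × Fin n, c (Fin.snoc p.1 p.2) := by
        rw [Fintype.sum_prod_type]; rfl
  _ = ∑ e, c e := Fintype.sum_equiv snocE _ _ (fun p => rfl)

lemma sum_ind_eq (c : E n s → ℕ) : ∑ v, ind c v = ∑ e, c e := by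
  calc ∑ v, ind c v = ∑ p : Fin n × V n s, c (Fin.cons p.1 p.2) := by
        rw [Fintype.sum_prod_type]
        rw [Finset.sum_comm]
        rfl
  _ = ∑ e, c e := Fintype.sum_equiv consE _ _ (fun p => rfl)

lemma path_trail (hs1 : 0 < s) (u u' : V n s) :
    ∃ pL : List (E n s), Tr pL u u' ∧ (∑ i, cnt pL i = s) := by
  set q : ℕ → Fin n := fun a =>
    if h : a < s then u ⟨a, h⟩ else if h2 : a - s < s then u' ⟨a - s, h2⟩ else u ⟨0, hs1⟩ with hq
  set pedge : ℕ → E n s := fun t => fun r => q (t + r.val) with hpedge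
  set pL : List (E n s) := (List.range s).map pedge with hpL
  have hlen : pL.length = s := by simp [hpL]
  have hget : ∀ (i : ℕ) (h : i < pL.length), pL.get ⟨i, h⟩ = pedge i := by
    intro i h
    simp [hpL]
  have hgetE : ∀ (i : ℕ) (h : i < pL.length), pL[i] = pedge i := by
    intro i h
    simp [hpL]
  have hne : pL ≠ [] := by
    rw [← List.length_pos_iff]
    omega
  refine ⟨pL, ⟨hne, ?_, ?_, ?_⟩, ?_⟩
  · rw [List.isChain_iff_getElem]
    intro i hi
    rw [hgetE, hgetE]
    show compat (pedge i) (pedge (i+1))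
    funext r
    show q (i + (r.val + 1)) = q ((i+1) + r.val)
    exact congrArg q (by omega)
  · intro y hy
    rw [List.head?_eq_getElem?, List.getElem?_eq_getElem (by omega : 0 < pL.length)] at hy
    simp only [Option.mem_some_iff] at hy
    subst hy
    rw [hgetE 0 (by omega)]
    funext r
    have hr := r.isLt
    show q (0 + r.val) = u r
    simp only [hq]
    rw [dif_pos (by omega : 0 + r.val < s)]
    exact congrArg u (Fin.ext (by simp))
  · intro x hx
    rw [List.getLast?_eq_getElem?, List.getElem?_eq_getElem (by omega : pL.length - 1 < pL.length)] at hx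
    simp only [Option.mem_some_iff] at hx
    subst hx
    rw [hgetE (pL.length - 1) (by omega)]
    funext r
    have hr := r.isLt
    show q ((pL.length - 1) + (r.val + 1)) = u' r
    simp only [hq]
    rw [dif_neg (by omega), dif_pos (by omega : (pL.length - 1) + (r.val + 1) - s < s)]
    exact congrArg u' (Fin.ext (by simp; omega))
  · rw [sum_cnt, hlen]

lemma repair (hn : 0 < n) : ∀ (K : ℕ) (g : E n s → ℕ),
    (∑ v : V n s, ((ind g v : ℤ) - (outd g v : ℤ)).natAbs ≤ 2 * K) →
    ∃ r : E n s → ℕ, (∀ v, outd (fun e => g e + r e) v = ind (fun e => g e + r e) v) ∧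
      ∑ i, r i ≤ K * s := by
  intro K
  induction K with
  | zero =>
      intro g hD
      refine ⟨fun _ => 0, ?_, by simp⟩
      intro v
      have h1 : ((ind g v : ℤ) - (outd g v : ℤ)).natAbs = 0 := by
        have hz : ∑ v : V n s, ((ind g v : ℤ) - (outd g v : ℤ)).natAbs = 0 := by omega
        exact Finset.sum_eq_zero_iff.mp hz v (Finset.mem_univ v)
      have h2 : ind g v = outd g v := by omega
      simp only [outd, ind, add_zero]
      have := h2
      simp only [outd, ind] at this
      omega
  | succ K ih =>
      intro g hD
      by_cases h0 : ∀ v, ind g v = outd g v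
      · refine ⟨fun _ => 0, ?_, by simp⟩
        intro v
        have := h0 v
        simp only [outd, ind, add_zero] at *
        omega
      · push_neg at h0
        obtain ⟨v₀, hv₀⟩ := h0
        have hsum0 : ∑ v, ((ind g v : ℤ) - (outd g v : ℤ)) = 0 := by
          rw [Finset.sum_sub_distrib]
          have h1 : ∑ v, (ind g v : ℤ) = ((∑ v, ind g v : ℕ) : ℤ) := by push_cast; rfl
          have h2 : ∑ v, (outd g v : ℤ) = ((∑ v, outd g v : ℕ) : ℤ) := by push_cast; rfl
          rw [h1, h2, sum_ind_eq, sum_outd_eq, sub_self]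
        have hexpos : ∃ u, (0:ℤ) < (ind g u : ℤ) - (outd g u : ℤ) := by
          by_contra hno
          push_neg at hno
          have hv₀' : (ind g v₀ : ℤ) - (outd g v₀ : ℤ) < 0 := by
            have := hno v₀
            have : ((ind g v₀ : ℤ) - (outd g v₀ : ℤ)) ≠ 0 := by
              intro hh; apply hv₀; omega
            omega
          have : ∑ v, ((ind g v : ℤ) - (outd g v : ℤ)) < ∑ v : V n s, (0:ℤ) :=
            Finset.sum_lt_sum (fun i _ => hno i) ⟨v₀, Finset.mem_univ _, hv₀'⟩
          simp [hsum0] at this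
        have hexneg : ∃ u', (ind g u' : ℤ) - (outd g u' : ℤ) < 0 := by
          by_contra hno
          push_neg at hno
          have hv₀' : (0:ℤ) < (ind g v₀ : ℤ) - (outd g v₀ : ℤ) := by
            have := hno v₀
            have : ((ind g v₀ : ℤ) - (outd g v₀ : ℤ)) ≠ 0 := by
              intro hh; apply hv₀; omega
            omega
          have : ∑ v : V n s, (0:ℤ) < ∑ v, ((ind g v : ℤ) - (outd g v : ℤ)) :=
            Finset.sum_lt_sum (fun i _ => hno i) ⟨v₀, Finset.mem_univ _, hv₀'⟩
          simp [hsum0] at this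
        obtain ⟨u, hu⟩ := hexpos
        obtain ⟨u', hu'⟩ := hexneg
        have huu' : u ≠ u' := by
          intro hh
          rw [hh] at hu
          omega
        have hs1 : 0 < s := by
          rcases Nat.eq_zero_or_pos s with hs0 | hs1
          · exfalso
            apply huu'
            funext r
            rw [hs0] at r
            exact absurd r.isLt (by omega)
          · exact hs1
        obtain ⟨pL, htrP, hsumP⟩ := path_trail hs1 u u'
        set r₀ : E n s → ℕ := cnt pL with hr₀
        have hdeg : ∀ x, outd r₀ x + (if x = u' then 1 else 0)
            = ind r₀ x + (if x = u then 1 else 0) := by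
          intro x
          have hcc := tr_count htrP x
          rw [countP_init, countP_tail] at hcc
          rw [hr₀]
          omega
        set g' : E n s → ℕ := fun e => g e + r₀ e with hg'
        have hout' : ∀ v, outd g' v = outd g v + outd r₀ v := fun v => outd_add g r₀ v
        have hind' : ∀ v, ind g' v = ind g v + ind r₀ v := fun v => ind_add g r₀ v
        have hpoint : ∀ v, ((ind g' v : ℤ) - (outd g' v : ℤ)).natAbs
            + ((if v = u then 1 else 0) + (if v = u' then 1 else 0))
            = ((ind g v : ℤ) - (outd g v : ℤ)).natAbs := by
          intro v
          have hd := hdeg v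
          have ho := hout' v
          have hi := hind' v
          rw [ho, hi]
          by_cases h1 : v = u
          · subst h1
            rw [if_pos rfl, if_neg huu']
            rw [if_pos rfl, if_neg huu'] at hd
            omega
          · by_cases h2 : v = u'
            · subst h2
              rw [if_neg h1, if_pos rfl]
              rw [if_neg h1, if_pos rfl] at hd
              omega
            · rw [if_neg h1, if_neg h2]
              rw [if_neg h1, if_neg h2] at hd
              omega
        have hD' : ∑ v : V n s, ((ind g' v : ℤ) - (outd g' v : ℤ)).natAbs ≤ 2 * K := by
          have hsum := Finset.sum_congr rfl (fun v (_ : v ∈ Finset.univ) => (hpoint v).symm)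
          have h2 : ∑ v : V n s, ((ind g v : ℤ) - (outd g v : ℤ)).natAbs
              = ∑ v : V n s, ((ind g' v : ℤ) - (outd g' v : ℤ)).natAbs + 2 := by
            rw [hsum]
            rw [Finset.sum_add_distrib, Finset.sum_add_distrib]
            simp [Finset.sum_ite_eq']
          omega
        obtain ⟨r', hbal', hsum'⟩ := ih g' hD'
        refine ⟨fun e => r₀ e + r' e, ?_, ?_⟩
        · intro v
          have := hbal' v
          have heq : (fun e => g' e + r' e) = (fun e => g e + (r₀ e + r' e)) := by
            funext e
            simp only [hg']
            ring
          rwa [heq] at this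
        · rw [Finset.sum_add_distrib]
          have h1 : ∑ i, r₀ i = s := hsumP
          have hKs : (K+1)*s = K*s + s := by ring
          rw [hKs]
          omega

lemma stat_top : ∀ {s' : ℕ} (ψ : (Fin (s'+1) → Fin n) → ℝ), IsStatT s' ψ →
    ∀ i : Fin s' → Fin n, ∑ j, ψ (Fin.snoc i j) = ∑ j, ψ (Fin.cons j i)
  | 0, ψ, _, i => by
    have hkey : ∀ j : Fin n, (Fin.snoc i j : Fin 1 → Fin n) = Fin.cons j i := by
      intro j
      funext r
      have hr : r = (0 : Fin (0+1)) := by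
        apply Fin.ext
        simp only [Fin.val_zero]
        have := r.isLt
        omega
      subst hr
      simp [Fin.snoc_zero, Fin.cons_zero]
    exact Finset.sum_congr rfl fun j _ => by rw [hkey j]
  | (k+1), ψ, h, i => h.1 i

lemma sum_empT (m : ℕ) (x : Fin (m+1) → Fin n) : ∑ i, empT s x i = 1 := by
  unfold empT
  rw [← Finset.sum_div]
  rw [Finset.sum_comm]
  have hone : ∀ t : Fin (m+1), ∑ i : E n s,
      (if (fun r : Fin (s+1) => x (t + (r.val : Fin (m+1)))) = i then (1:ℝ) else 0) = 1 := by
    intro t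
    rw [Finset.sum_ite_eq]
    simp
  rw [Finset.sum_congr rfl fun t _ => hone t]
  simp
  exact Nat.cast_add_one_ne_zero m

lemma empT_nonneg (m : ℕ) (x : Fin (m+1) → Fin n) (i : E n s) : 0 ≤ empT s x i := by
  unfold empT
  apply div_nonneg
  · apply Finset.sum_nonneg
    intro t _
    split <;> norm_num
  · positivity

lemma pad_balance (e0 : E n s) (he0 : Fin.init e0 = Fin.tail e0) (p : ℕ) (v : V n s) :
    outd (fun e => if e = e0 then p else 0) v = ind (fun e => if e = e0 then p else 0) v := by
  by_cases hv1 : v = Fin.init e0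
  · have hout : outd (fun e => if e = e0 then p else 0) v = p := by
      rw [outd, Finset.sum_eq_single (e0 (Fin.last s))]
      · rw [if_pos]; rw [hv1]; exact Fin.snoc_init_self e0
      · intro j _ hj
        rw [if_neg]
        intro hcontra
        exact hj (by rw [← hcontra, Fin.snoc_last])
      · simp
    have hind : ind (fun e => if e = e0 then p else 0) v = p := by
      rw [ind, Finset.sum_eq_single (e0 0)]
      · rw [if_pos]; rw [hv1, he0]; exact Fin.cons_self_tail e0
      · intro j _ hj
        rw [if_neg]
        intro hcontra
        exact hj (by rw [← hcontra, Fin.cons_zero])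
      · simp
    rw [hout, hind]
  · have hout : outd (fun e => if e = e0 then p else 0) v = 0 := by
      rw [outd, Finset.sum_eq_zero]
      intro j _
      rw [if_neg]
      intro hcontra
      exact hv1 (by rw [← hcontra, Fin.init_snoc])
    have hind : ind (fun e => if e = e0 then p else 0) v = 0 := by
      rw [ind, Finset.sum_eq_zero]
      intro j _
      rw [if_neg]
      intro hcontra
      apply hv1
      rw [he0, ← hcontra, Fin.tail_cons]
    rw [hout, hind]

lemma card_E : Fintype.card (E n s) = n^(s+1) := by
  rw [Fintype.card_fun, Fintype.card_fin, Fintype.card_fin]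

lemma card_V : Fintype.card (V n s) = n^s := by
  rw [Fintype.card_fun, Fintype.card_fin, Fintype.card_fin]

lemma construct (hn : 0 < n) (ψ : E n s → ℝ) (hprob : IsProbF ψ)
    (hstat : ∀ i : V n s, ∑ j, ψ (Fin.snoc i j) = ∑ j, ψ (Fin.cons j i))
    (m : ℕ) (hbig : (s+1) * n^(s+1) ≤ m + 1) :
    ∃ c f : E n s → ℕ,
      (∑ e, c e = m + 1) ∧ (∀ v, outd c v = ind c v) ∧ (∀ e, 1 ≤ c e) ∧
      (∀ i, f i ≤ c i) ∧ (∀ i, (f i : ℝ) ≤ ((m:ℝ)+1) * ψ i) ∧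
      (((m:ℝ)+1) - ((s:ℝ)+2) * (n:ℝ)^(s+1) ≤ ∑ i, (f i : ℝ)) := by
  set N : ℕ := n^(s+1) with hN
  set l' : ℕ := (m + 1) - (s+1) * N with hl'
  have hl'eq : l' + (s+1) * N = m + 1 := by omega
  set f : E n s → ℕ := fun i => ⌊(l' : ℝ) * ψ i⌋₊ with hf
  have hfle : ∀ i, (f i : ℝ) ≤ (l' : ℝ) * ψ i := by
    intro i
    exact Nat.floor_le (mul_nonneg (Nat.cast_nonneg _) (hprob.1 i))
  have hflt : ∀ i, (l' : ℝ) * ψ i < (f i : ℝ) + 1 := by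
    intro i
    exact Nat.lt_floor_add_one _
  have hsumfleR : ∑ i, (f i : ℝ) ≤ (l' : ℝ) := by
    calc ∑ i, (f i : ℝ) ≤ ∑ i, (l' : ℝ) * ψ i := Finset.sum_le_sum fun i _ => hfle i
    _ = (l' : ℝ) * ∑ i, ψ i := by rw [Finset.mul_sum]
    _ = (l' : ℝ) := by rw [hprob.2, mul_one]
  have hsumfleN : ∑ i, f i ≤ l' := by
    have : ((∑ i, f i : ℕ) : ℝ) ≤ (l' : ℝ) := by push_cast; exact hsumfleR
    exact_mod_cast this
  have hsumfge : (l' : ℝ) - (N : ℝ) ≤ ∑ i, (f i : ℝ) := by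
    have h1 : ∑ i, ((l' : ℝ) * ψ i - 1) ≤ ∑ i, (f i : ℝ) := by
      apply Finset.sum_le_sum
      intro i _
      have := hflt i
      linarith
    have h2 : ∑ i, ((l' : ℝ) * ψ i - 1) = (l' : ℝ) - (N : ℝ) := by
      rw [Finset.sum_sub_distrib, ← Finset.mul_sum, hprob.2, mul_one]
      congr 1
      rw [Finset.sum_const, Finset.card_univ, card_E]
      rw [hN]
      push_cast
      ring
    linarith
  -- degree bound
  have hdeg : ∀ v : V n s, ((ind f v : ℤ) - (outd f v : ℤ)).natAbs ≤ n := by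
    intro v
    have hA : (outd f v : ℝ) ≤ ∑ j, (l' : ℝ) * ψ (Fin.snoc v j) := by
      rw [outd]
      push_cast
      exact Finset.sum_le_sum fun j _ => hfle _
    have hA' : ∑ j, (l' : ℝ) * ψ (Fin.snoc v j) < (outd f v : ℝ) + n := by
      have h1 : ∑ j, (l' : ℝ) * ψ (Fin.snoc v j) < ∑ j : Fin n, ((f (Fin.snoc v j) : ℝ) + 1) := by
        apply Finset.sum_lt_sum_of_nonempty
        · exact ⟨⟨0, hn⟩, Finset.mem_univ _⟩
        · intro j _
          exact hflt _
      have h2 : ∑ j : Fin n, ((f (Fin.snoc v j) : ℝ) + 1) = (outd f v : ℝ) + n := by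
        rw [Finset.sum_add_distrib, Finset.sum_const, Finset.card_univ, Fintype.card_fin]
        rw [outd]
        push_cast
        ring
      linarith
    have hB : (ind f v : ℝ) ≤ ∑ j, (l' : ℝ) * ψ (Fin.cons j v) := by
      rw [ind]
      push_cast
      exact Finset.sum_le_sum fun j _ => hfle _
    have hB' : ∑ j, (l' : ℝ) * ψ (Fin.cons j v) < (ind f v : ℝ) + n := by
      have h1 : ∑ j, (l' : ℝ) * ψ (Fin.cons j v) < ∑ j : Fin n, ((f (Fin.cons j v) : ℝ) + 1) := by
        apply Finset.sum_lt_sum_of_nonempty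
        · exact ⟨⟨0, hn⟩, Finset.mem_univ _⟩
        · intro j _
          exact hflt _
      have h2 : ∑ j : Fin n, ((f (Fin.cons j v) : ℝ) + 1) = (ind f v : ℝ) + n := by
        rw [Finset.sum_add_distrib, Finset.sum_const, Finset.card_univ, Fintype.card_fin]
        rw [ind]
        push_cast
        ring
      linarith
    have hAB : ∑ j, (l' : ℝ) * ψ (Fin.snoc v j) = ∑ j, (l' : ℝ) * ψ (Fin.cons j v) := by
      rw [← Finset.mul_sum, ← Finset.mul_sum, hstat v]
    have hio : ind f v < outd f v + n := by
      have : (ind f v : ℝ) < (outd f v : ℝ) + n := by linarith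
      exact_mod_cast this
    have hoi : outd f v < ind f v + n := by
      have : (outd f v : ℝ) < (ind f v : ℝ) + n := by linarith
      exact_mod_cast this
    omega
  have hDf : ∑ v : V n s, ((ind f v : ℤ) - (outd f v : ℤ)).natAbs ≤ 2 * N := by
    calc ∑ v : V n s, ((ind f v : ℤ) - (outd f v : ℤ)).natAbs ≤ ∑ v : V n s, n :=
          Finset.sum_le_sum fun v _ => hdeg v
    _ = n^s * n := by rw [Finset.sum_const, Finset.card_univ, card_V, smul_eq_mul]
    _ = N := by rw [hN, pow_succ]
    _ ≤ 2 * N := by omega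
  obtain ⟨r, hbalfr, hsumr⟩ := repair hn N f hDf
  have hple : ∑ e, f e + N + ∑ e, r e ≤ m + 1 := by
    have h1 : N * s = s * N := by ring
    have h2 : (s+1) * N = s * N + N := by ring
    omega
  set p : ℕ := (m + 1) - (∑ e, f e + N + ∑ e, r e) with hp
  set estar : E n s := fun _ => ⟨0, hn⟩ with hestar
  have hestareq : Fin.init estar = Fin.tail estar := rfl
  set c : E n s → ℕ := fun e => (f e + r e) + (1 + (if e = estar then p else 0)) with hc
  refine ⟨c, f, ?_, ?_, ?_, ?_, ?_, ?_⟩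
  · -- total sum
    have h1 : ∑ e, c e = (∑ e, f e + ∑ e, r e) + (∑ e : E n s, 1 +
        ∑ e : E n s, (if e = estar then p else 0)) := by
      rw [hc, Finset.sum_add_distrib, Finset.sum_add_distrib, Finset.sum_add_distrib]
    have h2 : ∑ e : E n s, 1 = N := by
      rw [Finset.sum_const, Finset.card_univ, card_E, smul_eq_mul, mul_one]
    have h3 : ∑ e : E n s, (if e = estar then p else 0) = p := by
      rw [Finset.sum_ite_eq' Finset.univ estar (fun _ => p)]
      simp
    rw [h1, h2, h3]
    omega
  · -- balance
    intro v
    have ho : outd c v = outd (fun e => f e + r e) v + (outd (fun _ => (1:ℕ)) v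
        + outd (fun e => if e = estar then p else 0) v) := by
      simp only [outd, hc, Finset.sum_add_distrib]
    have hi : ind c v = ind (fun e => f e + r e) v + (ind (fun _ => (1:ℕ)) v
        + ind (fun e => if e = estar then p else 0) v) := by
      simp only [ind, hc, Finset.sum_add_distrib]
    have hones : outd (fun _ => (1:ℕ)) v = ind (fun _ => (1:ℕ)) v := by
      simp [outd, ind]
    rw [ho, hi, hbalfr v, hones, pad_balance estar hestareq p v]
  · intro e
    simp only [hc]
    omega
  · intro i
    simp only [hc]
    omega
  · intro i
    calc (f i : ℝ) ≤ (l' : ℝ) * ψ i := hfle i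
    _ ≤ ((m:ℝ)+1) * ψ i := by
        apply mul_le_mul_of_nonneg_right _ (hprob.1 i)
        have : l' ≤ m + 1 := by omega
        exact_mod_cast this
  · have hcast : (l' : ℝ) = ((m:ℝ)+1) - ((s:ℝ)+1) * (n:ℝ)^(s+1) := by
      have h1 : (l' : ℝ) = ((l' : ℕ) : ℝ) := rfl
      rw [hl']
      push_cast [Nat.sub_add_cancel]
      rw [Nat.cast_sub (by omega : (s+1) * N ≤ m + 1)]
      push_cast [hN]
      ring
    have : (l' : ℝ) - (N : ℝ) ≤ ∑ i, (f i : ℝ) := hsumfge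
    rw [hcast] at this
    have hNcast : (N : ℝ) = (n:ℝ)^(s+1) := by rw [hN]; push_cast; ring
    rw [hNcast] at this
    linarith

lemma emp_val (m : ℕ) (x : Fin (m+1) → Fin n) (c : E n s → ℕ)
    (hx : ∀ i : E n s, (∑ t : Fin (m+1), if (fun r : Fin (s+1) => x (t + (r.val : Fin (m+1)))) = i
        then (1:ℝ) else 0) = (c i : ℝ)) (i : E n s) :
    empT s x i = (c i : ℝ) / ((m:ℝ)+1) := by
  unfold empT
  rw [hx i]
  push_cast
  ring

lemma per_m (hn : 0 < n) (ψ : E n s → ℝ) (hprob : IsProbF ψ)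
    (hstat : ∀ i : V n s, ∑ j, ψ (Fin.snoc i j) = ∑ j, ψ (Fin.cons j i)) (m : ℕ) :
    ∃ ν ∈ Eset n s m, ∑ i, |ψ i - ν i| ≤ 2 * ((s:ℝ)+3) * (n:ℝ)^(s+1) / ((m:ℝ)+1) := by
  have hL : (0:ℝ) < (m:ℝ) + 1 := by positivity
  have hNpos : (0:ℝ) < (n:ℝ)^(s+1) := by positivity
  by_cases hcase : m + 1 ≤ (s+3) * n^(s+1)
  · -- trivial case
    set x : Fin (m+1) → Fin n := fun _ => ⟨0, hn⟩ with hxdef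
    refine ⟨empT s x, ?_, ?_⟩
    · simp only [Eset]
      exact Finset.mem_image.mpr ⟨x, Finset.mem_univ _, rfl⟩
    · have h2 : ∑ i, |ψ i - empT s x i| ≤ 2 := by
        calc ∑ i, |ψ i - empT s x i| ≤ ∑ i, (ψ i + empT s x i) := by
              apply Finset.sum_le_sum
              intro i _
              have h1 := hprob.1 i
              have h2 := empT_nonneg m x i
              rw [abs_le]
              constructor <;> linarith
        _ = 2 := by
              rw [Finset.sum_add_distrib, hprob.2, sum_empT]
              norm_num
      have h3 : (2:ℝ) ≤ 2 * ((s:ℝ)+3) * (n:ℝ)^(s+1) / ((m:ℝ)+1) := by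
        rw [le_div_iff₀ hL]
        have hc : ((m:ℝ)+1) ≤ ((s:ℝ)+3) * (n:ℝ)^(s+1) := by
          have := hcase
          push_cast at *
          exact_mod_cast by push_cast; linarith [this] 
        nlinarith
      linarith
  · push_neg at hcase
    have hbig : (s+1) * n^(s+1) ≤ m + 1 := by
      have h1 : (s+1) * n^(s+1) ≤ (s+3) * n^(s+1) := Nat.mul_le_mul_right _ (by omega)
      omega
    obtain ⟨c, f, hsc, hbal, hpos, hfc, hfpsi, hflow⟩ := construct hn ψ hprob hstat m hbig
    obtain ⟨W, v, htr, hcnt⟩ := euler c hn hbal hpos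
    have hlenW : W.length = m + 1 := by
      have h1 : ∑ i, cnt W i = ∑ i, c i := Finset.sum_congr rfl fun i _ => hcnt i
      rw [sum_cnt] at h1
      omega
    obtain ⟨x, hx⟩ := trail_to_path m W v htr hlenW
    have hxc : ∀ i : E n s, (∑ t : Fin (m+1),
        if (fun r : Fin (s+1) => x (t + (r.val : Fin (m+1)))) = i then (1:ℝ) else 0)
        = (c i : ℝ) := by
      intro i
      rw [hx i, hcnt i]
    refine ⟨empT s x, ?_, ?_⟩
    · simp only [Eset]
      exact Finset.mem_image.mpr ⟨x, Finset.mem_univ _, rfl⟩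
    · have hemp : ∀ i, empT s x i = (c i : ℝ) / ((m:ℝ)+1) := emp_val m x c hxc
      have key : ∀ i, |ψ i - empT s x i| ≤
          (ψ i - (f i : ℝ)/((m:ℝ)+1)) + ((c i : ℝ) - (f i : ℝ))/((m:ℝ)+1) := by
        intro i
        rw [hemp i]
        have h1 : (f i : ℝ)/((m:ℝ)+1) ≤ ψ i := by
          rw [div_le_iff₀ hL]
          calc (f i : ℝ) ≤ ((m:ℝ)+1) * ψ i := hfpsi i
          _ = ψ i * ((m:ℝ)+1) := by ring
        have h2 : (f i : ℝ) ≤ (c i : ℝ) := by exact_mod_cast hfc i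
        have h3 : ψ i - (c i : ℝ)/((m:ℝ)+1) =
            (ψ i - (f i : ℝ)/((m:ℝ)+1)) - ((c i : ℝ) - (f i : ℝ))/((m:ℝ)+1) := by
          ring
        rw [h3]
        have h4 : (0:ℝ) ≤ ψ i - (f i : ℝ)/((m:ℝ)+1) := by linarith
        have h5 : (0:ℝ) ≤ ((c i : ℝ) - (f i : ℝ))/((m:ℝ)+1) := by
          apply div_nonneg _ (le_of_lt hL)
          linarith
        rw [abs_le]
        constructor <;> linarith
      have hsum : ∑ i, |ψ i - empT s x i| ≤
          (1 - (∑ i, (f i : ℝ))/((m:ℝ)+1)) + (((m:ℝ)+1) - ∑ i, (f i : ℝ))/((m:ℝ)+1) := by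
        calc ∑ i, |ψ i - empT s x i| ≤
            ∑ i, ((ψ i - (f i : ℝ)/((m:ℝ)+1)) + ((c i : ℝ) - (f i : ℝ))/((m:ℝ)+1)) :=
              Finset.sum_le_sum fun i _ => key i
        _ = (1 - (∑ i, (f i : ℝ))/((m:ℝ)+1)) + (((m:ℝ)+1) - ∑ i, (f i : ℝ))/((m:ℝ)+1) := by
            rw [Finset.sum_add_distrib, Finset.sum_sub_distrib, hprob.2]
            rw [← Finset.sum_div, ← Finset.sum_div, Finset.sum_sub_distrib]
            have hc : ∑ i, (c i : ℝ) = ((m:ℝ)+1) := by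
              have h0 : ((∑ e, c e : ℕ) : ℝ) = ((m:ℝ)+1) := by rw [hsc]; push_cast; ring
              rw [← h0]
              push_cast
              ring
            rw [hc]
      have hF : ((m:ℝ)+1) - ∑ i, (f i : ℝ) ≤ ((s:ℝ)+2) * (n:ℝ)^(s+1) := by linarith
      have hfinal : (1 - (∑ i, (f i : ℝ))/((m:ℝ)+1)) + (((m:ℝ)+1) - ∑ i, (f i : ℝ))/((m:ℝ)+1)
          ≤ 2 * ((s:ℝ)+3) * (n:ℝ)^(s+1) / ((m:ℝ)+1) := by
        have h1 : 1 - (∑ i, (f i : ℝ))/((m:ℝ)+1) = (((m:ℝ)+1) - ∑ i, (f i : ℝ))/((m:ℝ)+1) := by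
          field_simp
        rw [h1, ← add_div, div_le_div_iff₀ hL hL]
        have h2 : ((s:ℝ)+2) ≤ ((s:ℝ)+3) := by linarith
        nlinarith [hF, hNpos, hL]
      linarith
  
theorem stmt7' {n s : ℕ} (ψ : (Fin (s+1) → Fin n) → ℝ)
    (hψprob : IsProbF ψ) (hψstat : IsStatT s ψ) :
    (∀ m : ℕ, ∃ ν ∈ Eset n s m,
      ∑ i, |ψ i - ν i| ≤ 2 * ((s:ℝ)+3) * (n:ℝ)^(s+1) / ((m:ℝ)+1)) ∧
    ∃ νseq : (m : ℕ) → (Fin (s+1) → Fin n) → ℝ,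
      (∀ m, νseq m ∈ Eset n s m) ∧
      Filter.Tendsto (fun m => ∑ i, |ψ i - νseq m i|) Filter.atTop (nhds 0) := by
  have hn : 0 < n := by
    by_contra hn0
    have hn0 : n = 0 := by omega
    subst hn0
    have hempty : IsEmpty (E 0 s) := by
      refine ⟨fun e => ?_⟩
      exact absurd (e 0).isLt (by omega)
    have h2 := hψprob.2
    rw [Finset.univ_eq_empty, Finset.sum_empty] at h2
    exact absurd h2 (by norm_num)
  have hstat := stat_top ψ hψstat
  have h1 : ∀ m : ℕ, ∃ ν ∈ Eset n s m,
      ∑ i, |ψ i - ν i| ≤ 2 * ((s:ℝ)+3) * (n:ℝ)^(s+1) / ((m:ℝ)+1) :=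
    fun m => per_m hn ψ hψprob hstat m
  refine ⟨h1, ?_⟩
  choose ν hmem hbound using h1
  refine ⟨ν, hmem, ?_⟩
  apply squeeze_zero
  · intro m
    apply Finset.sum_nonneg
    intro i _
    exact abs_nonneg _
  · exact hbound
  · have h2 := (tendsto_const_div_atTop_nhds_zero_nat
      (2 * ((s:ℝ)+3) * (n:ℝ)^(s+1))).comp (Filter.tendsto_add_atTop_nat 1)
    have h3 : (fun m : ℕ => 2 * ((s:ℝ)+3) * (n:ℝ)^(s+1) / ((m:ℝ)+1))
        = (fun k : ℕ => 2 * ((s:ℝ)+3) * (n:ℝ)^(s+1) / (k : ℝ)) ∘ (fun m : ℕ => m + 1) := by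
      funext m
      simp only [Function.comp]
      push_cast
      ring_nf
    rw [h3]
    exact h2

end Stmt7

/-- For every stationary distribution `ψ ∈ M_s(A^{s+1})` and every
integer `l ≥ 1` (here `l = m+1`), the minimum over `ν ∈ E(l,n,s+1)` of the ℓ¹-distance
`‖ψ − ν‖₁` is at most `2(s+3) n^{s+1} / l`; consequently every stationary distribution
on `A^{s+1}` is the limit in total variation of a sequence of empirical measures
`ν_l ∈ E(l,n,s+1)`. -/


theorem stmt7 {n s : ℕ} (ψ : (Fin (s+1) → Fin n) → ℝ)
    (hψprob : IsProbF ψ) (hψstat : IsStatT s ψ) :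
    (∀ m : ℕ, ∃ ν ∈ Eset n s m,
      ∑ i, |ψ i - ν i| ≤ 2 * ((s:ℝ)+3) * (n:ℝ)^(s+1) / ((m:ℝ)+1)) ∧
    ∃ νseq : (m : ℕ) → (Fin (s+1) → Fin n) → ℝ,
      (∀ m, νseq m ∈ Eset n s m) ∧
      Filter.Tendsto (fun m => ∑ i, |ψ i - νseq m i|) Filter.atTop (nhds 0) :=
  Stmt7.stmt7' ψ hψprob hψstat
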